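/- arXiv:1208.3058 — 3 statements merged into one kernel-verified Lean document; each statement's English description precedes it below -/
import Mathlib

section
/- Let q₁ > q₂ > ... > q_m be in [1/6, 2/11) and β₁, ..., β_m real numbers, not all zero. Then for all sufficiently large n, |β₁q₁ⁿ + ... + β_m q_mⁿ| ≤ 5 ∑_{k>n} |β₁q₁ᵏ + ... + β_m q_mᵏ|. -/
open Set Filter Topology

/-- The achievement set (set of all subsums) of a series `∑ x n`. -/
noncomputable def achSet (x : ℕ → ℝ) : Set ℝ :=
  {a : ℝ | ∃ A : Set ℕ, HasSum (fun n : A => x n) a}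

/-- The tail sum `∑_{i > n} |x i|`. -/
noncomputable def tailSum (x : ℕ → ℝ) (n : ℕ) : ℝ := ∑' i : ℕ, |x (n + 1 + i)|

/-- `S` is a finite union of closed intervals. -/
def IsFinUnionClosedIntervals (S : Set ℝ) : Prop :=
  ∃ s : Finset (ℝ × ℝ), S = ⋃ p ∈ s, Set.Icc p.1 p.2

/-- `S` is homeomorphic to the Cantor set (the Cantor space `ℕ → Bool`). -/
def CantorLike (S : Set ℝ) : Prop := Nonempty (S ≃ₜ (ℕ → Bool))

theorem jones_estimate_upper (m : ℕ) (q β : Fin m → ℝ) (hq : StrictAnti q)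
    (hqI : ∀ i, q i ∈ Set.Ico (1 / 6 : ℝ) (2 / 11)) (hβ : ∃ i, β i ≠ 0) :
    ∀ᶠ n in atTop,
      |∑ i, β i * q i ^ n| ≤ 5 * ∑' k : ℕ, |∑ i, β i * q i ^ (n + 1 + k)| := by
  classical
  have hq0 : ∀ i, (0:ℝ) < q i := fun i => lt_of_lt_of_le (by norm_num) (hqI i).1
  have hq1 : ∀ i, q i < 1 := fun i => lt_trans (hqI i).2 (by norm_num)
  have hq1' : ∀ i, (0:ℝ) < 1 - q i := fun i => by linarith [hq1 i]
  set T : ℕ → ℝ := fun n => ∑ i, β i * (q i ^ (n+1) / (1 - q i)) with hTdef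
  -- Step 1 : |T n| is at most the tail sum of absolute values
  have step1 : ∀ n : ℕ, |T n| ≤ ∑' k : ℕ, |∑ i, β i * q i ^ (n + 1 + k)| := by
    intro n
    have hsum : ∀ i : Fin m, Summable (fun k : ℕ => β i * q i ^ (n+1+k)) := by
      intro i
      have he : (fun k : ℕ => β i * q i ^ (n+1+k))
          = fun k => (β i * q i ^ (n+1)) * q i ^ k := by
        funext k; rw [pow_add]; ring
      rw [he]
      exact (summable_geometric_of_lt_one (hq0 i).le (hq1 i)).mul_left _
    have hFabs : Summable (fun k : ℕ => |∑ i, β i * q i ^ (n+1+k)|) := by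
      have hb : Summable (fun k : ℕ => ∑ i, |β i * q i ^ (n+1+k)|) :=
        summable_sum fun i _ => (hsum i).abs
      exact hb.of_nonneg_of_le (fun k => abs_nonneg _)
        (fun k => Finset.abs_sum_le_sum_abs _ _)
    have hts : ∑' k : ℕ, (∑ i, β i * q i ^ (n+1+k)) = T n := by
      rw [Summable.tsum_finsetSum fun i _ => hsum i]
      refine Finset.sum_congr rfl fun i _ => ?_
      have he : (fun k : ℕ => β i * q i ^ (n+1+k))
          = fun k => (β i * q i ^ (n+1)) * q i ^ k := by
        funext k; rw [pow_add]; ring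
      rw [he, tsum_mul_left, tsum_geometric_of_lt_one (hq0 i).le (hq1 i)]
      rw [div_eq_mul_inv, mul_assoc]
    calc |T n| = ‖∑' k : ℕ, (∑ i, β i * q i ^ (n+1+k))‖ := by
          rw [hts, Real.norm_eq_abs]
      _ ≤ ∑' k : ℕ, ‖∑ i, β i * q i ^ (n+1+k)‖ :=
          norm_tsum_le_tsum_norm (by simpa [Real.norm_eq_abs] using hFabs)
      _ = ∑' k : ℕ, |∑ i, β i * q i ^ (n+1+k)| := by simp [Real.norm_eq_abs]
  -- the minimal index with nonzero coefficient
  obtain ⟨j, hj⟩ := hβ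
  set S : Finset (Fin m) := Finset.univ.filter (fun i => β i ≠ 0) with hSdef
  have hS : S.Nonempty := ⟨j, by simp [hSdef, hj]⟩
  set i₀ : Fin m := S.min' hS with hi₀def
  have hβ₀ : β i₀ ≠ 0 := by
    have := S.min'_mem hS
    simpa [hSdef] using this
  have hmin : ∀ i, β i ≠ 0 → i₀ ≤ i := fun i h => S.min'_le i (by simp [hSdef, h])
  have hβz : ∀ i, i < i₀ → β i = 0 := by
    intro i h
    by_contra hne
    exact absurd (hmin i hne) (not_le.mpr h)
  -- Step 2 : eventually |F n| ≤ 5 * |T n|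
  have step2 : ∀ᶠ n in atTop, |∑ i, β i * q i ^ n| ≤ 5 * |T n| := by
    rcases eq_or_lt_of_le (hqI i₀).1 with heq | hlt
    · -- q i₀ = 1/6 : only one nonzero coefficient, equality
      have hzero : ∀ i, i ≠ i₀ → β i = 0 := by
        intro i hi
        by_contra h
        have h2 : i₀ < i := lt_of_le_of_ne (hmin i h) (Ne.symm hi)
        have h3 : q i < q i₀ := hq h2
        have h4 := (hqI i).1
        rw [← heq] at h3
        linarith
      have hF : ∀ n : ℕ, (∑ i, β i * q i ^ n) = β i₀ * q i₀ ^ n := by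
        intro n
        refine Finset.sum_eq_single i₀ (fun i _ hi => by rw [hzero i hi, zero_mul]) ?_
        intro h; exact absurd (Finset.mem_univ i₀) h
      have hTn : ∀ n : ℕ, T n = β i₀ * (q i₀ ^ (n+1) / (1 - q i₀)) := by
        intro n
        refine Finset.sum_eq_single i₀ (fun i _ hi => by rw [hzero i hi, zero_mul]) ?_
        intro h; exact absurd (Finset.mem_univ i₀) h
      filter_upwards with n
      rw [hF n, hTn n, abs_mul, abs_mul, ← heq]
      have h1 : |(1/6:ℝ) ^ n| = (1/6:ℝ)^n := abs_of_pos (by positivity)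
      have h2 : |((1/6:ℝ)) ^ (n+1) / (1 - 1/6)| = (1/6:ℝ)^(n+1) / (1 - 1/6) :=
        abs_of_pos (by positivity)
      rw [h1, h2, pow_succ]
      have : (5:ℝ) * (|β i₀| * ((1/6:ℝ)^n * (1/6) / (1 - 1/6))) = |β i₀| * (1/6:ℝ)^n := by
        ring
      rw [this]
    · -- q i₀ > 1/6
      have key : ∀ γ : Fin m → ℝ, (∀ i, i < i₀ → γ i = 0) →
          Tendsto (fun n : ℕ => ∑ i, γ i * (q i / q i₀) ^ n) atTop (𝓝 (γ i₀)) := by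
        intro γ hγ
        have hrw : γ i₀ = ∑ i : Fin m, (if i = i₀ then γ i₀ else 0) := by simp
        rw [hrw]
        apply tendsto_finset_sum
        intro i _
        by_cases hi : i = i₀
        · simp only [if_pos hi, hi]
          have he : (fun n : ℕ => γ i₀ * (q i₀ / q i₀) ^ n) = fun _ => γ i₀ := by
            funext n; rw [div_self (hq0 i₀).ne', one_pow, mul_one]
          rw [he]; exact tendsto_const_nhds
        · simp only [if_neg hi]
          rcases lt_or_ge i i₀ with h | h
          · simp [hγ i h]
          · have h2 : i₀ < i := lt_of_le_of_ne h (fun e => hi e.symm)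
            have hlt2 : q i < q i₀ := hq h2
            have h01 : 0 ≤ q i / q i₀ := div_nonneg (hq0 i).le (hq0 i₀).le
            have h11 : q i / q i₀ < 1 := (div_lt_one (hq0 i₀)).mpr hlt2
            have := (tendsto_pow_atTop_nhds_zero_of_lt_one h01 h11).const_mul (γ i)
            simpa using this
      have tG := key β hβz
      have tH := key (fun i => β i * (5 * q i / (1 - q i)))
        (fun i h => by simp [hβz i h])
      have hc : 1 < 5 * q i₀ / (1 - q i₀) := by
        rw [lt_div_iff₀ (hq1' i₀)]
        linarith
      have hlim : |β i₀| < |β i₀ * (5 * q i₀ / (1 - q i₀))| := by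
        rw [abs_mul, abs_of_pos (by linarith : (0:ℝ) < 5 * q i₀ / (1 - q i₀))]
        have : 0 < |β i₀| := abs_pos.mpr hβ₀
        nlinarith
      have tdiff := (tH.abs).sub (tG.abs)
      have hev : ∀ᶠ n in atTop,
          (0:ℝ) < |∑ i, (β i * (5 * q i / (1 - q i))) * (q i / q i₀) ^ n|
              - |∑ i, β i * (q i / q i₀) ^ n| :=
        tdiff.eventually (eventually_gt_nhds (by linarith))
      filter_upwards [hev] with n hn
      have hQn : (0:ℝ) < q i₀ ^ n := pow_pos (hq0 i₀) n
      have e1 : (∑ i, β i * q i ^ n)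
          = (∑ i, β i * (q i / q i₀) ^ n) * q i₀ ^ n := by
        rw [Finset.sum_mul]
        refine Finset.sum_congr rfl fun i _ => ?_
        rw [div_pow, mul_assoc, div_mul_cancel₀ _ hQn.ne']
      have e2 : 5 * T n
          = (∑ i, (β i * (5 * q i / (1 - q i))) * (q i / q i₀) ^ n) * q i₀ ^ n := by
        rw [hTdef]
        simp only
        rw [Finset.mul_sum, Finset.sum_mul]
        refine Finset.sum_congr rfl fun i _ => ?_
        rw [div_pow, mul_assoc, div_mul_cancel₀ _ hQn.ne', pow_succ]
        field_simp
      calc |∑ i, β i * q i ^ n|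
          = |∑ i, β i * (q i / q i₀) ^ n| * q i₀ ^ n := by
            rw [e1, abs_mul, abs_of_pos hQn]
        _ ≤ |∑ i, (β i * (5 * q i / (1 - q i))) * (q i / q i₀) ^ n| * q i₀ ^ n :=
            mul_le_mul_of_nonneg_right (by linarith) hQn.le
        _ = |5 * T n| := by
            rw [← abs_of_pos hQn, ← abs_mul, ← e2]
        _ = 5 * |T n| := by
            rw [abs_mul, abs_of_pos (by norm_num : (0:ℝ) < 5)]
  -- combine
  filter_upwards [step2] with n h2
  calc |∑ i, β i * q i ^ n| ≤ 5 * |T n| := h2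
    _ ≤ 5 * ∑' k : ℕ, |∑ i, β i * q i ^ (n + 1 + k)| :=
        mul_le_mul_of_nonneg_left (step1 n) (by norm_num)
end

section
/- For the Guthrie–Nymann sequence b with b(2n−1) = 3/4ⁿ and b(2n) = 2/4ⁿ, the achievement set T = E(b) has nonempty interior but is not a finite union of closed intervals. -/
open Set Filter Topology

/-- The Guthrie–Nymann sequence: `3/4, 2/4, 3/16, 2/16, 3/64, 2/64, …`,
i.e. `b (2n) = 3 / 4 ^ (n + 1)` and `b (2n + 1) = 2 / 4 ^ (n + 1)`. -/
noncomputable def gnSeq (n : ℕ) : ℝ :=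
  if n % 2 = 0 then 3 / 4 ^ (n / 2 + 1) else 2 / 4 ^ (n / 2 + 1)

lemma gnSeq_nonneg (n : ℕ) : 0 ≤ gnSeq n := by
  unfold gnSeq; split <;> positivity

lemma gnSeq_add_two (n : ℕ) : gnSeq (n + 2) = gnSeq n / 4 := by
  unfold gnSeq
  have h1 : (n + 2) % 2 = n % 2 := by omega
  have h2 : (n + 2) / 2 = n / 2 + 1 := by omega
  rw [h1, h2]
  split <;> · rw [pow_succ]; ring

lemma gnSeq_even (k : ℕ) : gnSeq (2 * k) = 3 / 4 ^ (k + 1) := by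
  unfold gnSeq
  have h1 : (2 * k) % 2 = 0 := by omega
  have h2 : (2 * k) / 2 = k := by omega
  rw [h1, h2]; simp

lemma gnSeq_odd (k : ℕ) : gnSeq (2 * k + 1) = 2 / 4 ^ (k + 1) := by
  unfold gnSeq
  have h1 : (2 * k + 1) % 2 = 1 := by omega
  have h2 : (2 * k + 1) / 2 = k := by omega
  rw [h1, h2]; simp

lemma hasSum_gnSeq : HasSum gnSeq (5 / 3) := by
  have hgeo : HasSum (fun n : ℕ => (1 / 4 : ℝ) ^ n) (4 / 3) := by
    have := hasSum_geometric_of_lt_one (by norm_num : (0:ℝ) ≤ 1/4) (by norm_num)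
    convert this using 1; norm_num
  have heven : HasSum (fun k => gnSeq (2 * k)) 1 := by
    have := hgeo.mul_left (3 / 4)
    have h : (fun k : ℕ => (3 / 4 : ℝ) * (1 / 4) ^ k) = fun k => gnSeq (2 * k) := by
      funext k; rw [gnSeq_even, pow_succ, div_pow, one_pow]; ring
    rw [h] at this
    rw [show (3/4:ℝ) * (4/3) = 1 by norm_num] at this; exact this
  have hodd : HasSum (fun k => gnSeq (2 * k + 1)) (2 / 3) := by
    have := hgeo.mul_left (2 / 4)
    have h : (fun k : ℕ => (2 / 4 : ℝ) * (1 / 4) ^ k) = fun k => gnSeq (2 * k + 1) := by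
      funext k; rw [gnSeq_odd, pow_succ, div_pow, one_pow]; ring
    rw [h] at this
    rw [show (2/4:ℝ) * (4/3) = 2/3 by norm_num] at this; exact this
  have := heven.even_add_odd hodd
  convert this using 1; norm_num

lemma gnSeq_shift (j n : ℕ) : gnSeq (n + 2 * j) = gnSeq n / 4 ^ j := by
  induction j with
  | zero => simp
  | succ j ih =>
      have : n + 2 * (j + 1) = (n + 2 * j) + 2 := by ring
      rw [this, gnSeq_add_two, ih, pow_succ, div_div]


lemma mem_achSet_iff {a : ℝ} : a ∈ achSet gnSeq ↔ ∃ A : Set ℕ, HasSum (A.indicator gnSeq) a := by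
  constructor
  · rintro ⟨A, hA⟩
    exact ⟨A, (hasSum_subtype_iff_indicator (s := A) (f := gnSeq)).mp hA⟩
  · rintro ⟨A, hA⟩
    exact ⟨A, (hasSum_subtype_iff_indicator (s := A) (f := gnSeq)).mpr hA⟩

lemma pow4_mod3 (k : ℕ) : 4 ^ k % 3 = 1 := by
  induction k with
  | zero => rfl
  | succ k ih => rw [pow_succ]; omega

/-- digit decomposition arithmetic. -/
lemma digit_decomp (N m : ℕ) (hN : 1 ≤ N) (hN3 : N % 3 = 1)
    (h1 : 2 * (4 * N - 1) ≤ 3 * m) (h2 : m ≤ 4 * N - 1) :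
    ∃ q c, (c = 0 ∨ c = 2 ∨ c = 3 ∨ c = 5) ∧ m = 4 * q + c ∧
      2 * (N - 1) ≤ 3 * q ∧ q ≤ N - 1 := by
  have hmod : m % 4 = 0 ∨ m % 4 = 1 ∨ m % 4 = 2 ∨ m % 4 = 3 := by omega
  rcases hmod with h | h | h | h
  · exact ⟨m / 4, 0, by omega, by omega, by omega, by omega⟩
  · exact ⟨m / 4 - 1, 5, by omega, by omega, by omega, by omega⟩
  · exact ⟨m / 4, 2, by omega, by omega, by omega, by omega⟩
  · exact ⟨m / 4, 3, by omega, by omega, by omega, by omega⟩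

/-- finite subsums with indices `< 2k` realize `m / 4^k` for all
integers `m` in the run `[2(4^k-1)/3, 4^k-1]`. -/
lemma finsum_run (k : ℕ) : ∀ m : ℕ, 2 * (4 ^ k - 1) ≤ 3 * m → m ≤ 4 ^ k - 1 →
    ∃ F : Finset ℕ, (∀ i ∈ F, i < 2 * k) ∧ ∑ i ∈ F, gnSeq i = (m : ℝ) / 4 ^ k := by
  induction k with
  | zero =>
      intro m h1 h2
      refine ⟨∅, by simp, ?_⟩
      have : m = 0 := by omega
      simp [this]
  | succ k ih =>
      intro m h1 h2
      have hN : (1:ℕ) ≤ 4 ^ k := Nat.one_le_pow _ _ (by norm_num)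
      have hN3 : 4 ^ k % 3 = 1 := pow4_mod3 k
      have hpow : (4:ℕ) ^ (k+1) = 4 * 4 ^ k := by rw [pow_succ]; ring
      rw [hpow] at h1 h2
      obtain ⟨q, c, hc, hm, hq1, hq2⟩ := digit_decomp (4 ^ k) m hN hN3 h1 h2
      obtain ⟨F, hF, hFs⟩ := ih q hq1 hq2
      have hcast : ((m : ℝ)) = 4 * (q:ℝ) + (c:ℝ) := by exact_mod_cast hm
      have h4k : ((4:ℝ) ^ k) ≠ 0 := by positivity
      -- target value identity:  q/4^k + c/4^(k+1) = m/4^(k+1)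
      have hval : (q : ℝ) / 4 ^ k + (c : ℝ) / 4 ^ (k+1) = (m : ℝ) / 4 ^ (k+1) := by
        rw [hcast, pow_succ]
        field_simp
      have hE : gnSeq (2*k) = 3 / 4 ^ (k+1) := gnSeq_even k
      have hO : gnSeq (2*k+1) = 2 / 4 ^ (k+1) := gnSeq_odd k
      have hEni : 2*k ∉ F := fun h => by have := hF _ h; omega
      have hOni : 2*k+1 ∉ F := fun h => by have := hF _ h; omega
      rcases hc with rfl | rfl | rfl | rfl
      · refine ⟨F, fun i hi => by have := hF i hi; omega, ?_⟩
        rw [hFs, ← hval]; norm_num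
      · refine ⟨insert (2*k+1) F, ?_, ?_⟩
        · intro i hi; rcases Finset.mem_insert.mp hi with rfl | hi
          · omega
          · have := hF i hi; omega
        · rw [Finset.sum_insert hOni, hFs, hO, ← hval]
          push_cast; ring
      · refine ⟨insert (2*k) F, ?_, ?_⟩
        · intro i hi; rcases Finset.mem_insert.mp hi with rfl | hi
          · omega
          · have := hF i hi; omega
        · rw [Finset.sum_insert hEni, hFs, hE, ← hval]
          push_cast; ring
      · refine ⟨insert (2*k) (insert (2*k+1) F), ?_, ?_⟩
        · intro i hi
          rcases Finset.mem_insert.mp hi with rfl | hi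
          · omega
          rcases Finset.mem_insert.mp hi with rfl | hi
          · omega
          · have := hF i hi; omega
        · have hnotin : 2*k ∉ insert (2*k+1) F := by
            simp only [Finset.mem_insert]
            rintro (h | h); · omega
            · exact hEni h
          rw [Finset.sum_insert hnotin, Finset.sum_insert hOni, hFs, hE, hO, ← hval]
          push_cast; ring

lemma finite_mem_achSet (F : Finset ℕ) : (∑ i ∈ F, gnSeq i) ∈ achSet gnSeq := by
  rw [mem_achSet_iff]
  refine ⟨(F : Set ℕ), ?_⟩
  have h0 : ∀ b ∉ F, (F : Set ℕ).indicator gnSeq b = 0 := by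
    intro b hb; exact Set.indicator_of_notMem (by simpa using hb) _
  have h := hasSum_sum_of_ne_finset_zero (L := SummationFilter.unconditional ℕ) h0
  have heq : ∑ i ∈ F, (F : Set ℕ).indicator gnSeq i = ∑ i ∈ F, gnSeq i :=
    Finset.sum_congr rfl fun i hi => Set.indicator_of_mem (by simpa using hi) _
  rwa [heq] at h

lemma achSet_closed : IsClosed (achSet gnSeq) := by
  have hcont : Continuous fun ε : ℕ → Bool => ∑' n, (if ε n then gnSeq n else 0) := by
    apply continuous_tsum (u := gnSeq)
    · intro n
      exact (continuous_of_discreteTopology (α := Bool)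
        (f := fun b => if b then gnSeq n else 0)).comp (continuous_apply n)
    · exact hasSum_gnSeq.summable
    · intro n x
      rcases x n with _ | _ <;> simp [abs_of_nonneg (gnSeq_nonneg n), gnSeq_nonneg n]
  have hrange : achSet gnSeq = Set.range
      (fun ε : ℕ → Bool => ∑' n, (if ε n then gnSeq n else 0)) := by
    ext a
    constructor
    · intro ha
      rw [mem_achSet_iff] at ha
      obtain ⟨A, hA⟩ := ha
      classical
      refine ⟨fun n => decide (n ∈ A), ?_⟩
      have : (fun n => if decide (n ∈ A) then gnSeq n else 0) = A.indicator gnSeq := by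
        funext n; simp [Set.indicator_apply]
      simp only [this, hA.tsum_eq]
    · rintro ⟨ε, rfl⟩
      rw [mem_achSet_iff]
      refine ⟨{n | ε n = true}, ?_⟩
      have heq : ({n | ε n = true}).indicator gnSeq
          = fun n => if ε n then gnSeq n else 0 := by
        funext n; simp [Set.indicator_apply]
      rw [heq]
      have hsummable : Summable fun n => if ε n then gnSeq n else 0 := by
        apply Summable.of_nonneg_of_le _ _ hasSum_gnSeq.summable
        · intro n; split <;> simp [gnSeq_nonneg n]
        · intro n; split <;> simp [gnSeq_nonneg n]
      exact hsummable.hasSum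
  rw [hrange]
  exact (isCompact_range hcont).isClosed

lemma Icc_subset_achSet : Set.Icc (2/3 : ℝ) 1 ⊆ achSet gnSeq := by
  intro x hx
  obtain ⟨hx1, hx2⟩ := hx
  rw [← achSet_closed.closure_eq, Metric.mem_closure_iff]
  intro ε hε
  obtain ⟨k, hk⟩ := exists_pow_lt_of_lt_one hε (by norm_num : (1/4 : ℝ) < 1)
  have hKpos : (0:ℝ) < 4 ^ k := by positivity
  have hKn : (1:ℕ) ≤ 4 ^ k := Nat.one_le_pow _ _ (by norm_num)
  have hKcast : (((4:ℕ) ^ k : ℕ) : ℝ) = (4:ℝ) ^ k := by push_cast; norm_num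
  set y : ℝ := 4 ^ k * x with hy
  have hy0 : (0:ℝ) ≤ y := by rw [hy]; nlinarith
  have hfl : (⌊y⌋₊ : ℝ) ≤ y := Nat.floor_le hy0
  have hfl2 : y < (⌊y⌋₊ : ℝ) + 1 := Nat.lt_floor_add_one y
  have hylb : (2/3) * 4 ^ k ≤ y := by rw [hy]; nlinarith
  have hyub : y ≤ 4 ^ k := by rw [hy]; nlinarith
  have hmain : ∃ m : ℕ, 2 * (4 ^ k - 1) ≤ 3 * m ∧ m ≤ 4 ^ k - 1 ∧
      |x - (m:ℝ) / 4 ^ k| ≤ (1/4) ^ k := by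
    by_cases hcase : ⌊y⌋₊ ≤ 4 ^ k - 1
    · refine ⟨⌊y⌋₊, ?_, hcase, ?_⟩
      · by_contra hcon
        push_neg at hcon
        have h1 : 3 * ⌊y⌋₊ + 3 ≤ 2 * 4 ^ k := by omega
        have h2 : 3 * (⌊y⌋₊:ℝ) + 3 ≤ 2 * (4:ℝ) ^ k := by
          have := (Nat.cast_le (α := ℝ)).mpr h1
          push_cast at this
          convert this using 2 <;> norm_num
        linarith
      · have hnum : 0 ≤ y - (⌊y⌋₊:ℝ) := by linarith
        have hnum2 : y - (⌊y⌋₊:ℝ) ≤ 1 := by linarith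
        have hxeq : x - (⌊y⌋₊:ℝ)/4^k = (y - ⌊y⌋₊)/4^k := by
          rw [hy]; field_simp
        rw [hxeq, abs_of_nonneg (by positivity), div_pow, one_pow, div_le_div_iff₀ hKpos hKpos]
        nlinarith
    · -- here ⌊y⌋₊ ≥ 4^k, and y ≤ 4^k forces y = 4^k
      push_neg at hcase
      have hge : (4:ℕ) ^ k ≤ ⌊y⌋₊ := by omega
      have hyeq : ((4^k : ℕ) : ℝ) ≤ y := le_trans (by exact_mod_cast hge) hfl
      rw [hKcast] at hyeq
      refine ⟨4 ^ k - 1, by omega, le_refl _, ?_⟩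
      have hcast1 : ((4 ^ k - 1 : ℕ) : ℝ) = (4:ℝ)^k - 1 := by
        push_cast [hKn]
        norm_num
      rw [hcast1]
      have hxeq : x = y / 4 ^ k := by rw [hy]; field_simp
      have hyex : y = 4 ^ k := le_antisymm hyub hyeq
      rw [hxeq, hyex]
      have : (4:ℝ)^k / 4^k - ((4:ℝ)^k - 1)/4^k = 1/4^k := by
        field_simp
        ring
      rw [this, div_pow, one_pow, abs_of_nonneg (by positivity)]
  obtain ⟨m, hm1, hm2, hdist⟩ := hmain
  obtain ⟨F, _, hFs⟩ := finsum_run k m hm1 hm2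
  refine ⟨(m : ℝ) / 4 ^ k, by rw [← hFs]; exact finite_mem_achSet F, ?_⟩
  calc dist x ((m:ℝ)/4^k) = |x - (m:ℝ)/4^k| := by rw [Real.dist_eq]
    _ ≤ (1/4)^k := hdist
    _ < ε := hk

lemma gap_lemma (k : ℕ) {t : ℝ} (ht : t ∈ achSet gnSeq) :
    t ≤ (5/3) / 4 ^ (k+1) ∨ 2 / 4 ^ (k+1) ≤ t := by
  rw [mem_achSet_iff] at ht
  obtain ⟨A, hA⟩ := ht
  by_cases h : ∃ j ∈ A, j < 2 * k + 2
  · right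
    obtain ⟨j, hjA, hjlt⟩ := h
    have hle := le_hasSum hA j (fun i _ => Set.indicator_apply_nonneg (fun _ => gnSeq_nonneg _))
    have hj : A.indicator gnSeq j = gnSeq j := Set.indicator_of_mem hjA _
    rw [hj] at hle
    refine le_trans ?_ hle
    have hj2 : j / 2 + 1 ≤ k + 1 := by omega
    have hpow : (4:ℝ) ^ (j/2+1) ≤ 4 ^ (k+1) := by
      apply pow_le_pow_right₀ (by norm_num) hj2
    unfold gnSeq
    split
    · calc (2:ℝ)/4^(k+1) ≤ 2/4^(j/2+1) := by gcongr <;> norm_num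
        _ ≤ 3/4^(j/2+1) := by gcongr <;> norm_num
    · gcongr <;> norm_num
  · left
    push_neg at h
    -- tail sum
    have htail : HasSum (fun n => gnSeq (n + 2 * (k+1))) ((5/3) / 4 ^ (k+1)) := by
      have := hasSum_gnSeq.div_const ((4:ℝ)^(k+1))
      have heq : (fun n => gnSeq n / 4^(k+1)) = fun n => gnSeq (n + 2*(k+1)) := by
        funext n; rw [gnSeq_shift]
      rwa [heq] at this
    set B : Set ℕ := {n | 2 * k + 2 ≤ n} with hB
    have hBsum : HasSum (B.indicator gnSeq) ((5/3) / 4 ^ (k+1)) := by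
      have hinj : Function.Injective (fun n : ℕ => n + 2*(k+1)) := add_left_injective _
      rw [← Function.Injective.hasSum_iff hinj]
      · have : (B.indicator gnSeq) ∘ (fun n : ℕ => n + 2*(k+1))
            = fun n => gnSeq (n + 2*(k+1)) := by
          funext n
          have : n + 2*(k+1) ∈ B := by rw [hB]; simp; omega
          simp [Function.comp, Set.indicator_of_mem this]
        rw [this]; exact htail
      · intro x hx
        apply Set.indicator_of_notMem
        rw [hB]
        simp only [Set.mem_setOf_eq, not_le]
        by_contra hcon
        push_neg at hcon
        exact hx ⟨x - 2*(k+1), by show x - 2*(k+1) + 2*(k+1) = x; omega⟩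
    refine hasSum_le ?_ hA hBsum
    intro i
    by_cases hi : i ∈ A
    · have hiB : i ∈ B := by rw [hB]; simp only [Set.mem_setOf_eq]; have := h i hi; omega
      rw [Set.indicator_of_mem hi, Set.indicator_of_mem hiB]
    · rw [Set.indicator_of_notMem hi]
      exact Set.indicator_apply_nonneg (fun _ => gnSeq_nonneg _)

lemma gnSeq_mem_achSet (j : ℕ) : gnSeq j ∈ achSet gnSeq := by
  have : gnSeq j = ∑ i ∈ {j}, gnSeq i := by simp
  rw [this]; exact finite_mem_achSet {j}

lemma frontier_pt (k : ℕ) : (2 / 4 ^ (k+1) : ℝ) ∈ frontier (achSet gnSeq) := by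
  rw [frontier, Set.mem_diff]
  constructor
  · apply subset_closure
    have := gnSeq_mem_achSet (2*k+1)
    rwa [gnSeq_odd] at this
  · intro hmem
    rw [mem_interior_iff_mem_nhds, Metric.mem_nhds_iff] at hmem
    obtain ⟨ε, hε, hball⟩ := hmem
    have hδ : (0:ℝ) < (1/3) / 4^(k+1) := by positivity
    set d : ℝ := min (ε/2) ((1/3)/4^(k+1) / 2) with hd
    have hdpos : 0 < d := by apply lt_min (by linarith) (by positivity)
    set y : ℝ := 2/4^(k+1) - d with hy2
    have hyball : y ∈ Metric.ball (2/4^(k+1) : ℝ) ε := by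
      rw [Metric.mem_ball, Real.dist_eq, hy2]
      rw [abs_of_nonpos (by linarith)]
      have : d ≤ ε/2 := min_le_left _ _
      linarith
    have hyT := hball hyball
    rcases gap_lemma k hyT with h | h
    · have hdle : d ≤ (1/3)/4^(k+1) / 2 := min_le_right _ _
      have : (5/3 : ℝ)/4^(k+1) = 2/4^(k+1) - (1/3)/4^(k+1) := by ring
      rw [hy2] at h
      rw [this] at h
      linarith
    · rw [hy2] at h; linarith

lemma frontier_Icc_subset (a b : ℝ) : frontier (Set.Icc a b) ⊆ ({a, b} : Set ℝ) := by
  intro z hz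
  have h1 : z ∈ Set.Icc a b := by
    have := frontier_subset_closure hz
    rwa [closure_Icc] at this
  have h2 : z ∉ Set.Ioo a b := by
    intro hzo
    have : z ∈ interior (Set.Icc a b) := by rw [interior_Icc]; exact hzo
    exact hz.2 this
  simp only [Set.mem_Icc] at h1
  simp only [Set.mem_Ioo, not_and_or, not_lt] at h2
  rcases h2 with h2 | h2
  · left; linarith
  · right; exact Set.mem_singleton_iff.mpr (le_antisymm h1.2 h2)

lemma frontier_fin_union (s : Finset (ℝ × ℝ)) :
    frontier (⋃ p ∈ s, Set.Icc p.1 p.2) ⊆ ⋃ p ∈ s, ({p.1, p.2} : Set ℝ) := by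
  classical
  induction s using Finset.induction_on with
  | empty => simp
  | @insert a t hni ih =>
      rw [Finset.set_biUnion_insert, Finset.set_biUnion_insert]
      intro x hx
      rcases frontier_union_subset _ _ hx with h | h
      · exact Set.mem_union_left _ (frontier_Icc_subset a.1 a.2 h.1)
      · exact Set.mem_union_right _ (ih h.2)

theorem guthrie_nymann_cantorval :
    (interior (achSet gnSeq)).Nonempty ∧ ¬ IsFinUnionClosedIntervals (achSet gnSeq) := by
  constructor
  · refine ⟨3/4, ?_⟩
    have hsub : Set.Ioo (2/3 : ℝ) 1 ⊆ achSet gnSeq :=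
      fun x hx => Icc_subset_achSet (Set.Ioo_subset_Icc_self hx)
    have := interior_maximal hsub isOpen_Ioo
    apply this
    constructor <;> norm_num
  · rintro ⟨s, hs⟩
    have hPfin : (⋃ p ∈ s, ({p.1, p.2} : Set ℝ)).Finite := by
      rw [← Finset.set_biUnion_coe]
      exact s.finite_toSet.biUnion (fun p _ => (Set.finite_singleton p.2).insert p.1)
    have hfr : frontier (achSet gnSeq) ⊆ ⋃ p ∈ s, ({p.1, p.2} : Set ℝ) := by
      rw [hs]
      exact frontier_fin_union s
    have hinj : Function.Injective (fun k : ℕ => (2:ℝ) / 4 ^ (k+1)) := by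
      intro a b hab
      simp only at hab
      by_contra hne
      rcases Nat.lt_or_ge a b with h | h
      · have : (4:ℝ)^(a+1) < 4^(b+1) := pow_lt_pow_right₀ (by norm_num) (by omega)
        have h2 : (2:ℝ)/4^(b+1) < 2/4^(a+1) := by
          apply div_lt_div_of_pos_left (by norm_num) (by positivity) this
        rw [hab] at h2; linarith
      · have hlt : b < a := by omega
        have : (4:ℝ)^(b+1) < 4^(a+1) := pow_lt_pow_right₀ (by norm_num) (by omega)
        have h2 : (2:ℝ)/4^(a+1) < 2/4^(b+1) := by
          apply div_lt_div_of_pos_left (by norm_num) (by positivity) this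
        rw [hab] at h2; linarith
    have hrange : Set.range (fun k : ℕ => (2:ℝ) / 4 ^ (k+1)) ⊆
        ⋃ p ∈ s, ({p.1, p.2} : Set ℝ) := by
      rintro _ ⟨k, rfl⟩
      exact hfr (frontier_pt k)
    exact (infinite_range_of_injective hinj) (hPfin.subset hrange)
end

section
/- Let Y be an infinite-dimensional closed linear subspace of ℓ¹. Then there exists y ∈ Y such that E(y) contains a nondegenerate interval. Consequently, the set {x ∈ ℓ¹ : E(x) is nowhere dense} is not spaceable in ℓ¹. -/
open Set Filter Topology

-- shifted summability helper
lemma summable_shift {f : ℕ → ℝ} (hf : Summable f) (N : ℕ) :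
    Summable fun i => f (N + i) := by
  have := (summable_nat_add_iff N).2 hf
  simpa [Nat.add_comm] using this

lemma greedy_subset_achSet (x : ℕ → ℝ) (hx : ∀ n, 0 ≤ x n) (hsum : Summable x)
    (h : ∀ n, x n ≤ ∑' i, x (n + 1 + i)) :
    Set.Icc 0 (∑' i, x i) ⊆ achSet x := by
  intro t ht
  -- tail sums
  set R : ℕ → ℝ := fun n => ∑' i, x (n + i) with hR
  have hRsucc : ∀ n, R n = x n + R (n + 1) := by
    intro n
    have hs : Summable fun i => x (n + i) := summable_shift hsum n
    have := Summable.tsum_eq_zero_add hs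
    simp only [hR]
    rw [this]
    congr 1
    apply tsum_congr; intro i; congr 1; omega
  have hRcond : ∀ n, x n ≤ R (n + 1) := by
    intro n
    have := h n
    calc x n ≤ ∑' i, x (n + 1 + i) := this
    _ = R (n + 1) := by apply tsum_congr; intro i; congr 1
  have hRnonneg : ∀ n, 0 ≤ R n := fun n => tsum_nonneg fun i => hx _
  have hR0 : R 0 = ∑' i, x i := by apply tsum_congr; intro i; congr 1; omega
  have hRtendsto : Tendsto R atTop (𝓝 0) := by
    have := tendsto_sum_nat_add x
    · apply this.congr
      intro n
      apply tsum_congr; intro i; congr 1; omega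
  -- greedy partial sums
  set s : ℕ → ℝ := fun n => Nat.rec 0 (fun m sm => if sm + x m ≤ t then sm + x m else sm) n with hs
  have hs0 : s 0 = 0 := rfl
  have hssucc : ∀ n, s (n + 1) = if s n + x n ≤ t then s n + x n else s n := fun n => rfl
  have hinv : ∀ n, 0 ≤ t - s n ∧ t - s n ≤ R n := by
    intro n
    induction n with
    | zero => exact ⟨by simpa [hs0] using ht.1, by simpa [hs0, hR0] using ht.2⟩
    | succ n ih =>
      rw [hssucc n]
      by_cases hc : s n + x n ≤ t
      · rw [if_pos hc]
        constructor
        · linarith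
        · have := ih.2
          have := hRsucc n
          linarith
      · rw [if_neg hc]
        push_neg at hc
        exact ⟨ih.1, by have := hRcond n; linarith⟩
  set A : Set ℕ := {n | s n + x n ≤ t} with hA
  have hind : ∀ n, A.indicator x n = s (n + 1) - s n := by
    intro n
    by_cases hc : n ∈ A
    · have hc' : s n + x n ≤ t := hc
      rw [Set.indicator_of_mem hc, hssucc, if_pos hc']; ring
    · have hc' : ¬ (s n + x n ≤ t) := hc
      rw [Set.indicator_of_notMem hc, hssucc, if_neg hc']; ring
  have hpartial : ∀ n, ∑ i ∈ Finset.range n, A.indicator x i = s n := by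
    intro n
    induction n with
    | zero => simp [hs0]
    | succ n ih => rw [Finset.sum_range_succ, ih, hind]; ring
  have hsummable : Summable (A.indicator x) := by
    apply Summable.of_nonneg_of_le (fun n => Set.indicator_nonneg (fun i _ => hx i) n)
      (fun n => ?_) hsum
    by_cases hn : n ∈ A
    · rw [Set.indicator_of_mem hn]
    · rw [Set.indicator_of_notMem hn]; exact hx n
  have htend : Tendsto s atTop (𝓝 t) := by
    have h1 : Tendsto (fun n => s n - t) atTop (𝓝 0) := by
      apply squeeze_zero_norm (fun n => ?_) hRtendsto
      have := hinv n
      rw [Real.norm_eq_abs, abs_sub_comm, abs_of_nonneg this.1]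
      exact this.2
    have := h1.add_const t
    simpa using this
  have hts : HasSum (A.indicator x) t := by
    obtain ⟨L, hL⟩ := hsummable
    have := hL.tendsto_sum_nat
    have h2 : Tendsto s atTop (𝓝 L) := by
      apply this.congr
      intro n; exact hpartial n
    have : L = t := tendsto_nhds_unique h2 htend
    rwa [this] at hL
  exact ⟨A, (hasSum_subtype_iff_indicator).2 hts⟩

lemma interval_subset_achSet (x : ℕ → ℝ) (hsum : Summable fun n => |x n|)
    (h : ∀ n, |x n| ≤ ∑' i, |x (n + 1 + i)|) :
    ∃ a b : ℝ, b - a = ∑' i, |x i| ∧ Set.Icc a b ⊆ achSet x := by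
  set N : Set ℕ := {n | x n < 0} with hN
  have hNs : Summable (N.indicator fun n => |x n|) := by
    apply Summable.of_nonneg_of_le (fun n => Set.indicator_nonneg (fun i _ => abs_nonneg _) n)
      (fun n => ?_) hsum
    by_cases hn : n ∈ N
    · rw [Set.indicator_of_mem hn]
    · rw [Set.indicator_of_notMem hn]; exact abs_nonneg _
  set c : ℝ := ∑' n, N.indicator (fun n => |x n|) n with hc
  refine ⟨-c, ∑' i, |x i| - c, by ring, ?_⟩
  intro t ht
  have ht' : t + c ∈ Set.Icc 0 (∑' i, |x i|) := ⟨by linarith [ht.1], by linarith [ht.2]⟩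
  obtain ⟨B, hB⟩ := greedy_subset_achSet (fun n => |x n|) (fun n => abs_nonneg _) hsum h ht'
  have hB' : HasSum (B.indicator fun n => |x n|) (t + c) := hasSum_subtype_iff_indicator.mp hB
  set A : Set ℕ := (B ∩ Nᶜ) ∪ (Bᶜ ∩ N) with hA
  have key : A.indicator x = fun n =>
      B.indicator (fun n => |x n|) n - N.indicator (fun n => |x n|) n := by
    funext n
    have hmem : n ∈ A ↔ ((n ∈ B ∧ ¬ x n < 0) ∨ (n ∉ B ∧ x n < 0)) := by
      simp [hA, hN, Set.mem_union, Set.mem_inter_iff]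
    have hNmem : n ∈ N ↔ x n < 0 := Iff.rfl
    by_cases hxn : x n < 0
    · by_cases hb : n ∈ B
      · have h1 : n ∉ A := by rw [hmem]; tauto
        rw [Set.indicator_of_notMem h1, Set.indicator_of_mem hb,
          Set.indicator_of_mem (hNmem.2 hxn)]
        ring
      · have h1 : n ∈ A := hmem.2 (Or.inr ⟨hb, hxn⟩)
        rw [Set.indicator_of_mem h1, Set.indicator_of_notMem hb,
          Set.indicator_of_mem (hNmem.2 hxn)]
        rw [abs_of_neg hxn]; ring
    · have hnN : n ∉ N := hxn
      rw [Set.indicator_of_notMem hnN]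
      by_cases hb : n ∈ B
      · have h1 : n ∈ A := hmem.2 (Or.inl ⟨hb, hxn⟩)
        rw [Set.indicator_of_mem h1, Set.indicator_of_mem hb, abs_of_nonneg (not_lt.1 hxn)]
        ring
      · have h1 : n ∉ A := by rw [hmem]; tauto
        rw [Set.indicator_of_notMem h1, Set.indicator_of_notMem hb]
        ring
  refine ⟨A, hasSum_subtype_iff_indicator.mpr ?_⟩
  have hfin : HasSum (fun n => B.indicator (fun n => |x n|) n - N.indicator (fun n => |x n|) n)
      (t + c - c) := hB'.sub hNs.hasSum
  rw [key]
  simpa using hfin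

noncomputable abbrev E1 := lp (fun _ : ℕ => ℝ) 1


namespace E1

lemma coord_congr (f : E1) {a b : ℕ} (h : a = b) : |f a| = |f b| := by rw [h]

lemma hasSum_abs (f : E1) : HasSum (fun i => |f i|) ‖f‖ := by
  have h := lp.hasSum_norm (p := 1) (by norm_num) f
  simpa [Real.norm_eq_abs] using h

lemma summable_abs (f : E1) : Summable fun i => |f i| := (hasSum_abs f).summable

lemma abs_coord_le (f : E1) (n : ℕ) : |f n| ≤ ‖f‖ := by
  have := lp.norm_apply_le_norm (E := fun _ : ℕ => ℝ) (p := 1) (by norm_num) f n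
  simpa [Real.norm_eq_abs] using this

noncomputable def tailE (f : E1) (N : ℕ) : ℝ := ∑' i, |f (N + i)|

lemma summable_tail (f : E1) (N : ℕ) : Summable fun i => |f (N + i)| :=
  summable_shift (summable_abs f) N

lemma tailE_nonneg (f : E1) (N : ℕ) : 0 ≤ tailE f N :=
  tsum_nonneg fun _ => abs_nonneg _

lemma sum_range_add_tailE (f : E1) (M : ℕ) :
    ∑ i ∈ Finset.range M, |f i| + tailE f M = ‖f‖ := by
  have h := Summable.sum_add_tsum_nat_add (f := fun i => |f i|) M (summable_abs f)
  rw [(hasSum_abs f).tsum_eq] at h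
  rw [← h]
  congr 1
  exact tsum_congr fun i => coord_congr f (by omega)

lemma tailE_le_norm (f : E1) (N : ℕ) : tailE f N ≤ ‖f‖ := by
  have := sum_range_add_tailE f N
  have h2 : 0 ≤ ∑ i ∈ Finset.range N, |f i| := Finset.sum_nonneg fun _ _ => abs_nonneg _
  linarith

lemma abs_coord_le_tailE (f : E1) {N n : ℕ} (h : N ≤ n) : |f n| ≤ tailE f N := by
  have := Summable.le_tsum (summable_tail f N) (n - N) (fun i _ => abs_nonneg _)
  have heq : N + (n - N) = n := by omega
  rwa [heq] at this

lemma tailE_anti (f : E1) {N M : ℕ} (h : N ≤ M) : tailE f M ≤ tailE f N := by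
  have hsplit := Summable.sum_add_tsum_nat_add (f := fun i => |f (N + i)|) (M - N) (summable_tail f N)
  have heq : (∑' i, |f (N + (i + (M - N)))|) = tailE f M := by
    exact tsum_congr fun i => coord_congr f (by omega)
  rw [heq] at hsplit
  have h2 : 0 ≤ ∑ i ∈ Finset.range (M - N), |f (N + i)| :=
    Finset.sum_nonneg fun _ _ => abs_nonneg _
  have : tailE f N = ∑' i, |f (N + i)| := rfl
  linarith [hsplit]

lemma tailE_add_le (f g : E1) (N : ℕ) : tailE (f + g) N ≤ tailE f N + tailE g N := by
  unfold tailE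
  have h1 : ∀ i, |(f + g) (N + i)| ≤ |f (N + i)| + |g (N + i)| := by
    intro i
    rw [lp.coeFn_add]
    exact abs_add_le _ _
  calc ∑' i, |(f + g) (N + i)| ≤ ∑' i, (|f (N + i)| + |g (N + i)|) :=
        Summable.tsum_le_tsum h1 (summable_tail _ N) ((summable_tail f N).add (summable_tail g N))
    _ = tailE f N + tailE g N := Summable.tsum_add (summable_tail f N) (summable_tail g N)

lemma tailE_smul (c : ℝ) (f : E1) (N : ℕ) : tailE (c • f) N = |c| * tailE f N := by
  unfold tailE
  rw [← tsum_mul_left]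
  apply tsum_congr; intro i
  rw [lp.coeFn_smul]
  simp [abs_mul]

lemma tailE_sub_le (f g : E1) (N : ℕ) : tailE f N ≤ tailE g N + tailE (f - g) N := by
  have := tailE_add_le g (f - g) N
  simpa using this

lemma sum_Ico_le_tailE (f : E1) {a b N : ℕ} (h : N ≤ a) :
    ∑ i ∈ Finset.Ico a b, |f i| ≤ tailE f N := by
  have hsub : Finset.Ico a b ⊆ Finset.Ico N b := by
    apply Finset.Ico_subset_Ico h le_rfl
  have h1 : ∑ i ∈ Finset.Ico a b, |f i| ≤ ∑ i ∈ Finset.Ico N b, |f i| :=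
    Finset.sum_le_sum_of_subset_of_nonneg hsub fun i _ _ => abs_nonneg _
  have h2 : ∑ i ∈ Finset.Ico N b, |f i| = ∑ i ∈ Finset.range (b - N), |f (N + i)| := by
    rw [Finset.sum_Ico_eq_sum_range]
  have h3 : ∑ i ∈ Finset.range (b - N), |f (N + i)| ≤ tailE f N :=
    Summable.sum_le_tsum _ (fun i _ => abs_nonneg _) (summable_tail f N)
  linarith

lemma tailE_tendsto (f : E1) : Tendsto (fun N => tailE f N) atTop (𝓝 0) := by
  have := tendsto_sum_nat_add fun i => |f i|
  apply this.congr
  intro n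
  exact tsum_congr fun i => coord_congr f (by omega)

lemma tendsto_coord {g : ℕ → E1} {y : E1} (h : Tendsto g atTop (𝓝 y)) (n : ℕ) :
    Tendsto (fun k => g k n) atTop (𝓝 (y n)) := by
  rw [Metric.tendsto_atTop] at h ⊢
  intro ε hε
  obtain ⟨K, hK⟩ := h ε hε
  refine ⟨K, fun k hk => lt_of_le_of_lt ?_ (hK k hk)⟩
  rw [Real.dist_eq, dist_eq_norm]
  have : g k n - y n = (g k - y) n := by rw [lp.coeFn_sub]; simp
  rw [this]
  exact abs_coord_le _ n

end E1

lemma exists_unit_vanishing (Y : Submodule ℝ E1) (hY : ¬ FiniteDimensional ℝ Y) (N : ℕ) :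
    ∃ u : E1, u ∈ Y ∧ ‖u‖ = 1 ∧ ∀ i, i < N → u i = 0 := by
  let π : Y →ₗ[ℝ] (Fin N → ℝ) :=
    { toFun := fun f i => (f : E1) i.1
      map_add' := by intro f g; funext i; simp [lp.coeFn_add]
      map_smul' := by intro c f; funext i; simp [lp.coeFn_smul] }
  have hker : LinearMap.ker π ≠ ⊥ := by
    intro hbot
    apply hY
    exact FiniteDimensional.of_injective π (LinearMap.ker_eq_bot.mp hbot)
  obtain ⟨v, hv, hvne⟩ := Submodule.ne_bot_iff _ |>.mp hker
  have hvE : (v : E1) ≠ 0 := fun h => hvne (Subtype.coe_injective (by simpa using h))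
  have hnorm : ‖(v : E1)‖ ≠ 0 := norm_ne_zero_iff.mpr hvE
  refine ⟨‖(v : E1)‖⁻¹ • (v : E1), Y.smul_mem _ v.2, ?_, ?_⟩
  · rw [norm_smul, norm_inv, norm_norm]
    field_simp
  · intro i hi
    rw [lp.coeFn_smul]
    have : (v : E1) i = 0 := by
      have := congrFun hv (⟨i, hi⟩ : Fin N)
      simpa [π] using this
    simp [this]

open E1 in
lemma exists_block_seq (Y : Submodule ℝ E1) (hY : ¬ FiniteDimensional ℝ Y) :
    ∃ (N : ℕ → ℕ) (u : ℕ → E1),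
      N 0 = 0 ∧ StrictMono N ∧ (∀ k, u k ∈ Y) ∧ (∀ k, ‖u k‖ = 1) ∧
      (∀ k, ∀ i, i < N k → u k i = 0) ∧
      (∀ k, tailE (∑ j ∈ Finset.range (k+1), ((3:ℝ)/4)^j • u j) (N (k+1))
        ≤ (1/100) * ((3:ℝ)/4)^(2*(k+1))) := by
  have hstep : ∀ (k n : ℕ) (p : E1), ∃ m : ℕ,
      n < m ∧ tailE p m ≤ (1/100) * ((3:ℝ)/4)^(2*(k+1)) := by
    intro k n p
    have hpos : (0:ℝ) < (1/100) * ((3:ℝ)/4)^(2*(k+1)) := by positivity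
    have h1 : ∀ᶠ m in atTop, tailE p m ≤ (1/100) * ((3:ℝ)/4)^(2*(k+1)) :=
      (tailE_tendsto p).eventually (ge_mem_nhds hpos)
    exact ((eventually_gt_atTop n).and h1).exists.imp fun m hm => ⟨hm.1, hm.2⟩
  choose Nf hNf1 hNf2 using hstep
  choose uf huf1 huf2 huf3 using fun n => exists_unit_vanishing Y hY n
  -- state: (N_k, p_k)
  let F : ℕ → ℕ × E1 := fun k => Nat.rec ((0:ℕ), ((3:ℝ)/4)^0 • uf 0)
    (fun k s => (Nf k s.1 s.2, s.2 + ((3:ℝ)/4)^(k+1) • uf (Nf k s.1 s.2))) k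
  set N : ℕ → ℕ := fun k => (F k).1 with hN
  set u : ℕ → E1 := fun k => uf (N k) with hu
  have hF0 : F 0 = ((0:ℕ), ((3:ℝ)/4)^0 • uf 0) := rfl
  have hFsucc : ∀ k, F (k+1) = (Nf k (F k).1 (F k).2,
      (F k).2 + ((3:ℝ)/4)^(k+1) • uf (Nf k (F k).1 (F k).2)) := fun k => rfl
  have hNsucc : ∀ k, N (k+1) = Nf k (N k) (F k).2 := fun k => rfl
  have hinv : ∀ k, (F k).2 = ∑ j ∈ Finset.range (k+1), ((3:ℝ)/4)^j • u j := by
    intro k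
    induction k with
    | zero => simp [hF0, hu, hN, hF0]
    | succ k ih =>
      rw [Finset.sum_range_succ, ← ih, hFsucc k]
  have hNlt : ∀ k, N k < N (k+1) := by
    intro k; rw [hNsucc]; exact hNf1 k (N k) (F k).2
  refine ⟨N, u, rfl, strictMono_nat_of_lt_succ hNlt, fun k => huf1 _, fun k => huf2 _,
    fun k => huf3 _, fun k => ?_⟩
  rw [← hinv k, hNsucc k]
  exact hNf2 k (N k) (F k).2

open E1 in
lemma exists_good_element (Y : Submodule ℝ E1) (hcl : IsClosed (Y : Set E1))
    (hY : ¬ FiniteDimensional ℝ Y) :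
    ∃ y : E1, y ∈ Y ∧ (∀ n, |y n| ≤ tailSum (fun m => y m) n) ∧ 0 < ∑' i, |y i| := by
  obtain ⟨N, u, hN0, hNmono, huY, hunorm, huvan, htail⟩ := exists_block_seq Y hY
  set ρ : ℝ := (3:ℝ)/4 with hρ
  have hρ0 : (0:ℝ) ≤ ρ := by norm_num
  have hρ1 : ρ ≤ 1 := by norm_num
  set v : ℕ → E1 := fun k => ρ^k • u k with hv
  have hvnorm : ∀ k, ‖v k‖ = ρ^k := by
    intro k
    rw [hv, norm_smul, hunorm k, mul_one, norm_pow, Real.norm_eq_abs, abs_of_nonneg hρ0]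
  have hsumv : Summable v := by
    apply Summable.of_norm
    simp only [hvnorm]
    exact summable_geometric_of_lt_one hρ0 (by norm_num)
  set y : E1 := ∑' k, v k with hy
  have hhs : HasSum v y := hsumv.hasSum
  set P : ℕ → E1 := fun k => ∑ j ∈ Finset.range k, v j with hP
  have htendP : Tendsto P atTop (𝓝 y) := hhs.tendsto_sum_nat
  have hPmem : ∀ k, P k ∈ Y := fun k => Submodule.sum_mem Y fun j _ => Y.smul_mem _ (huY j)
  have hymem : y ∈ Y := hcl.mem_of_tendsto htendP (Eventually.of_forall hPmem)
  -- uniform tail bound for partial sums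
  have hPtail : ∀ k, tailE (P k) (N k) ≤ (1/100) * ρ^(2*k) := by
    intro k
    cases k with
    | zero =>
      have : P 0 = 0 := by simp [hP]
      rw [this]
      have h0 : tailE (0 : E1) (N 0) = 0 := by
        unfold tailE
        have : ∀ i : ℕ, |(0 : E1) (N 0 + i)| = 0 := by
          intro i; rw [lp.coeFn_zero]; simp
        rw [tsum_congr this]; simp
      rw [h0]; positivity
    | succ k => exact htail k
  -- coordinates of y are eventually-fixed partial sums
  have hcoord : ∀ n k, n < N (k+1) → y n = P (k+1) n := by
    intro n k hn
    have hconst : ∀ m, k+1 ≤ m → P m n = P (k+1) n := by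
      intro m hm
      induction m with
      | zero => omega
      | succ m ih =>
        rcases Nat.lt_or_ge m (k+1) with h1 | h1
        · have : m + 1 = k + 1 := by omega
          rw [this]
        · have hPm : P (m+1) = P m + v m := by rw [hP]; exact Finset.sum_range_succ v m
          have hvm0 : v m n = 0 := by
            have hn2 : n < N m := lt_of_lt_of_le hn (hNmono.le_iff_le.mpr h1)
            have := huvan m n hn2
            rw [hv]
            simp only [lp.coeFn_smul, Pi.smul_apply, this, smul_zero]
          rw [hPm, lp.coeFn_add, Pi.add_apply, hvm0, add_zero, ih h1]
    have h1 : Tendsto (fun m => P m n) atTop (𝓝 (P (k+1) n)) := by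
      apply tendsto_atTop_of_eventually_const (i₀ := k+1)
      exact fun m hm => hconst m hm
    exact tendsto_nhds_unique (tendsto_coord htendP n) h1
  -- tail bound on u
  have hutail : ∀ m, tailE (u m) (N (m+1)) ≤ 2 * (1/100) * ρ^m := by
    intro m
    have h1 : tailE (v m) (N (m+1)) ≤ tailE (P (m+1)) (N (m+1)) + tailE (P m) (N (m+1)) := by
      have := tailE_sub_le (v m) (P (m+1)) (N (m+1))
      have hPs : P (m+1) = P m + v m := Finset.sum_range_succ v m
      have heq : v m - P (m+1) = -(P m) := by rw [hPs]; abel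
      rw [heq] at this
      have hneg : tailE (-(P m)) (N (m+1)) = tailE (P m) (N (m+1)) := by
        have : -(P m) = (-1 : ℝ) • P m := by simp
        rw [this, tailE_smul]; simp
      rw [hneg] at this
      exact this
    have h2 : tailE (P m) (N (m+1)) ≤ tailE (P m) (N m) :=
      tailE_anti _ (le_of_lt (hNmono (Nat.lt_succ_self m)))
    have h3 : tailE (v m) (N (m+1)) = ρ^m * tailE (u m) (N (m+1)) := by
      rw [hv, tailE_smul]
      congr 1
      rw [abs_of_nonneg (pow_nonneg hρ0 m)]
    have h4 := hPtail (m+1)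
    have h5 := hPtail m
    have hb1 : ρ^(2*(m+1)) ≤ ρ^(2*m) := pow_le_pow_of_le_one hρ0 hρ1 (by omega)
    have key : ρ^m * tailE (u m) (N (m+1)) ≤ 2 * (1/100) * ρ^(2*m) := by
      rw [← h3]; linarith
    have hρm : (0:ℝ) < ρ^m := pow_pos (by norm_num) m
    have h2m : ρ^(2*m) = ρ^m * ρ^m := by rw [two_mul, pow_add]
    rw [h2m] at key
    have key2 : ρ^m * tailE (u m) (N (m+1)) ≤ ρ^m * (2 * (1/100) * ρ^m) := by
      have hre : 2 * (1/100) * (ρ^m * ρ^m) = ρ^m * (2 * (1/100) * ρ^m) := by ring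
      linarith [key]
    exact (mul_le_mul_iff_right₀ hρm).mp key2
  -- block lower bound
  have hblock : ∀ m, (97/100) * ρ^m ≤ ∑ i ∈ Finset.Ico (N m) (N (m+1)), |y i| := by
    intro m
    have hmono := le_of_lt (hNmono (Nat.lt_succ_self m))
    -- mass of u m in the block
    have humass : 1 - tailE (u m) (N (m+1)) ≤ ∑ i ∈ Finset.Ico (N m) (N (m+1)), |u m i| := by
      have hsplit : ∑ i ∈ Finset.range (N (m+1)), |u m i| + tailE (u m) (N (m+1)) = ‖u m‖ := by
        have h := Summable.sum_add_tsum_nat_add (f := fun i => |u m i|) (N (m+1)) (summable_abs (u m))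
        rw [(hasSum_abs (u m)).tsum_eq] at h
        rw [← h]
        congr 1
        unfold tailE
        exact tsum_congr fun i => by rw [Nat.add_comm]
      have hzero : ∑ i ∈ Finset.Ico 0 (N m), |u m i| = 0 := by
        apply Finset.sum_eq_zero
        intro i hi
        rw [huvan m i (Finset.mem_Ico.mp hi).2]
        simp
      have hcons : ∑ i ∈ Finset.Ico 0 (N m), |u m i| + ∑ i ∈ Finset.Ico (N m) (N (m+1)), |u m i|
          = ∑ i ∈ Finset.Ico 0 (N (m+1)), |u m i| :=
        Finset.sum_Ico_consecutive _ (Nat.zero_le _) hmono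
      rw [hzero, zero_add] at hcons
      rw [← Finset.range_eq_Ico] at hcons
      rw [hunorm m] at hsplit
      linarith
    -- pollution bound
    have hpol : ∑ i ∈ Finset.Ico (N m) (N (m+1)), |P m i| ≤ (1/100) * ρ^(2*m) :=
      le_trans (sum_Ico_le_tailE (P m) le_rfl) (hPtail m)
    -- pointwise: ρ^m |u m i| - |P m i| ≤ |y i|
    have hpt : ∀ i ∈ Finset.Ico (N m) (N (m+1)), ρ^m * |u m i| - |P m i| ≤ |y i| := by
      intro i hi
      obtain ⟨hi1, hi2⟩ := Finset.mem_Ico.mp hi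
      have hyi : y i = P m i + v m i := by
        rw [hcoord i m hi2]
        have hPs : P (m+1) = P m + v m := Finset.sum_range_succ v m
        rw [hPs, lp.coeFn_add, Pi.add_apply]
      have hvm : |v m i| = ρ^m * |u m i| := by
        rw [hv, lp.coeFn_smul]
        simp [abs_mul, abs_of_nonneg (pow_nonneg hρ0 m)]
      have : |v m i| ≤ |y i| + |P m i| := by
        rw [hyi]
        have : P m i + v m i - P m i = v m i := by ring
        calc |v m i| = |(P m i + v m i) - P m i| := by rw [this]
          _ ≤ |P m i + v m i| + |P m i| := abs_sub _ _
      linarith [hvm ▸ this]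
    have hsum := Finset.sum_le_sum hpt
    rw [Finset.sum_sub_distrib, ← Finset.mul_sum] at hsum
    have h1 := hutail m
    have hρm1 : ρ^m ≤ 1 := pow_le_one₀ hρ0 hρ1
    have hρ2m : ρ^(2*m) ≤ ρ^m := pow_le_pow_of_le_one hρ0 hρ1 (by omega)
    nlinarith [humass, hpol, pow_nonneg hρ0 m]
  -- positivity
  have hpos : 0 < ∑' i, |y i| := by
    have h0 : (97/100) * ρ^0 ≤ ∑ i ∈ Finset.Ico (N 0) (N 1), |y i| := hblock 0
    have h1 : ∑ i ∈ Finset.Ico (N 0) (N 1), |y i| ≤ ∑' i, |y i| :=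
      Summable.sum_le_tsum _ (fun i _ => abs_nonneg _) (summable_abs y)
    simp only [pow_zero, mul_one] at h0
    linarith
  refine ⟨y, hymem, ?_, hpos⟩
  intro n
  -- find the block containing n
  have hfind : ∃ k, N k ≤ n ∧ n < N (k+1) := by
    refine ⟨Nat.findGreatest (fun j => N j ≤ n) n, ?_, ?_⟩
    · exact Nat.findGreatest_spec (P := fun j => N j ≤ n) (m := 0) (Nat.zero_le n) (by show N 0 ≤ n; rw [hN0]; exact Nat.zero_le n)
    · rcases Nat.lt_or_ge n (Nat.findGreatest (fun j => N j ≤ n) n + 1) with h1 | h1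
      · exact lt_of_lt_of_le h1 hNmono.le_apply
      · by_contra hcon
        push_neg at hcon
        exact Nat.findGreatest_is_greatest (Nat.lt_succ_self _) h1 hcon
  obtain ⟨k, hk1, hk2⟩ := hfind
  -- upper bound on |y n|
  have hup : |y n| ≤ (101/100) * ρ^k := by
    have hyn : y n = P k n + v k n := by
      rw [hcoord n k hk2]
      have hPs : P (k+1) = P k + v k := Finset.sum_range_succ v k
      rw [hPs, lp.coeFn_add, Pi.add_apply]
    have h1 : |P k n| ≤ (1/100) * ρ^(2*k) :=
      le_trans (abs_coord_le_tailE (P k) hk1) (hPtail k)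
    have h2 : |v k n| ≤ ρ^k := by
      have : |v k n| ≤ ‖v k‖ := abs_coord_le (v k) n
      rwa [hvnorm k] at this
    have hρ2k : ρ^(2*k) ≤ ρ^k := pow_le_pow_of_le_one hρ0 hρ1 (by omega)
    have habs : |y n| ≤ |P k n| + |v k n| := by rw [hyn]; exact abs_add_le _ _
    linarith
  -- lower bound on tail
  have hlow : (97/100) * (ρ^(k+1) + ρ^(k+2) + ρ^(k+3)) ≤ tailSum (fun m => y m) n := by
    have hts : tailSum (fun m => y m) n = tailE y (n+1) := rfl
    have hc1 : ∑ i ∈ Finset.Ico (N (k+1)) (N (k+2)), |y i|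
        + ∑ i ∈ Finset.Ico (N (k+2)) (N (k+3)), |y i|
        = ∑ i ∈ Finset.Ico (N (k+1)) (N (k+3)), |y i| :=
      Finset.sum_Ico_consecutive _ (le_of_lt (hNmono (by omega))) (le_of_lt (hNmono (by omega)))
    have hc2 : ∑ i ∈ Finset.Ico (N (k+1)) (N (k+3)), |y i|
        + ∑ i ∈ Finset.Ico (N (k+3)) (N (k+4)), |y i|
        = ∑ i ∈ Finset.Ico (N (k+1)) (N (k+4)), |y i| :=
      Finset.sum_Ico_consecutive _ (le_of_lt (hNmono (by omega))) (le_of_lt (hNmono (by omega)))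
    have hle : ∑ i ∈ Finset.Ico (N (k+1)) (N (k+4)), |y i| ≤ tailE y (n+1) :=
      sum_Ico_le_tailE y (by omega)
    have b1 := hblock (k+1)
    have b2 := hblock (k+2)
    have b3 := hblock (k+3)
    rw [hts]
    linarith
  have hgeom : (101/100) * ρ^k ≤ (97/100) * (ρ^(k+1) + ρ^(k+2) + ρ^(k+3)) := by
    have e1 : ρ^(k+1) = ρ^k * ρ := pow_succ ρ k
    have e2 : ρ^(k+2) = ρ^k * ρ^2 := by rw [pow_add]
    have e3 : ρ^(k+3) = ρ^k * ρ^3 := by rw [pow_add]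
    rw [e1, e2, e3]
    have h0 : (0:ℝ) ≤ ρ^k := pow_nonneg hρ0 k
    have hρval : ρ = 3/4 := hρ
    rw [hρval]
    nlinarith [h0]
  linarith


theorem not_spaceable_nowhereDense_achSet :
    (∀ Y : Submodule ℝ (lp (fun _ : ℕ => ℝ) 1), IsClosed (Y : Set (lp (fun _ : ℕ => ℝ) 1)) →
      ¬ FiniteDimensional ℝ Y →
      ∃ y ∈ Y, ∃ a b : ℝ, a < b ∧ Set.Icc a b ⊆ achSet fun n => y n) ∧
    ¬ ∃ Y : Submodule ℝ (lp (fun _ : ℕ => ℝ) 1),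
        IsClosed (Y : Set (lp (fun _ : ℕ => ℝ) 1)) ∧ ¬ FiniteDimensional ℝ Y ∧
        (Y : Set (lp (fun _ : ℕ => ℝ) 1)) ⊆
          {x | IsNowhereDense (achSet fun n => x n)} ∪ {0} := by
  have main : ∀ Y : Submodule ℝ (lp (fun _ : ℕ => ℝ) 1),
      IsClosed (Y : Set (lp (fun _ : ℕ => ℝ) 1)) → ¬ FiniteDimensional ℝ Y →
      ∃ y ∈ Y, ∃ a b : ℝ, a < b ∧ Set.Icc a b ⊆ achSet fun n => y n := by
    intro Y hcl hfin
    obtain ⟨y, hyY, hcond, hpos⟩ := exists_good_element Y hcl hfin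
    obtain ⟨a, b, hab, hsub⟩ := interval_subset_achSet (fun n => y n) (E1.summable_abs y) hcond
    exact ⟨y, hyY, a, b, by linarith, hsub⟩
  refine ⟨main, ?_⟩
  rintro ⟨Y, hcl, hfin, hsub⟩
  obtain ⟨y, hyY, a, b, hab, hIcc⟩ := main Y hcl hfin
  rcases hsub hyY with hnd | h0
  · have hnd' : IsNowhereDense (achSet fun n => y n) := hnd
    have h1 : Set.Icc a b ⊆ closure (achSet fun n => y n) := hIcc.trans subset_closure
    have h2 : Set.Ioo a b ⊆ interior (closure (achSet fun n => y n)) := by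
      rw [← interior_Icc]
      exact interior_mono h1
    obtain ⟨t, ht⟩ := Set.nonempty_Ioo.2 hab
    have := h2 ht
    rw [hnd'] at this
    exact this
  · have h0' : y = 0 := Set.mem_singleton_iff.mp h0
    subst h0'
    have hzero : ∀ t ∈ achSet (fun n => (0 : lp (fun _ : ℕ => ℝ) 1) n), t = 0 := by
      intro t ht
      obtain ⟨A, hA⟩ := ht
      have heq : (fun n : A => (0 : lp (fun _ : ℕ => ℝ) 1) (n : ℕ)) = fun _ : A => (0:ℝ) := by
        funext n
        rw [lp.coeFn_zero]
        rfl
      rw [heq] at hA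
      exact hA.unique hasSum_zero
    have ha : a = 0 := hzero a (hIcc (Set.left_mem_Icc.2 hab.le))
    have hb : b = 0 := hzero b (hIcc (Set.right_mem_Icc.2 hab.le))
    rw [ha, hb] at hab
    exact lt_irrefl 0 hab
end
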